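/- Let T₁ = (U, A₁) and T₂ = (U, A₂) be two directed trees on the same vertex set U with |U| = n+1. Let M₁ be the A₁×A₂ network matrix of the pair (D₁ = (U,A₂), T₁) and M₂ be the A₂×A₁ network matrix of the pair (D₂ = (U,A₁), T₂). Then M₁ · M₂ equals the n×n identity matrix. -/

import Mathlib

open SimpleGraph

variable {U : Type*}

/-- The underlying simple graph of a set of arcs. -/
def arcGraph [DecidableEq U] (A : Finset (U × U)) : SimpleGraph U where
  Adj u v := u ≠ v ∧ ((u, v) ∈ A ∨ (v, u) ∈ A)
  symm := ⟨fun _ _ h => ⟨h.1.symm, h.2.symm⟩⟩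
  loopless := ⟨fun _ h => h.1 rfl⟩

/-- `A` is a directed tree on `U`: its underlying undirected graph is a (spanning) tree,
and arcs are loopless and not doubled. -/
def IsDirTree [DecidableEq U] (A : Finset (U × U)) : Prop :=
  (arcGraph A).IsTree ∧ ∀ p ∈ A, p.1 ≠ p.2 ∧ Prod.swap p ∉ A

/-- The list of (oriented) arcs traversed by a walk. -/
def dartProds [DecidableEq U] {A : Finset (U × U)} {u v : U}
    (p : (arcGraph A).Walk u v) : List (U × U) :=
  p.darts.map SimpleGraph.Dart.toProd

/-- `M` is the network matrix of the digraph with arc set `Arcs` w.r.t. the directed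
tree with arc set `A₀`: the entry `(f, a)` is `1`/`-1`/`0` according as the tree arc `f`
is forward/backward/absent on the unique tree path between the endpoints of `a`. -/
def IsNetworkMatrix [DecidableEq U] (A₀ Arcs : Finset (U × U))
    (M : (U × U) → (U × U) → ℝ) : Prop :=
  ∀ f ∈ A₀, ∀ a ∈ Arcs, ∀ p : (arcGraph A₀).Walk a.1 a.2, p.IsPath →
    M f a = if f ∈ dartProds p then 1 else if Prod.swap f ∈ dartProds p then -1 else 0

open Classical in
noncomputable def phi [DecidableEq U] (A : Finset (U × U)) (f : U × U) (w : U) : ℝ :=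
  if (arcGraph (A.erase f)).Reachable f.2 w then 1 else 0

lemma phi_sub [DecidableEq U] {A : Finset (U × U)} (hA : IsDirTree A)
    {f : U × U} (hf : f ∈ A) {u v : U} (h : (arcGraph A).Adj u v) :
    phi A f v - phi A f u
      = if (u, v) = f then 1 else if (v, u) = f then -1 else 0 := by
  classical
  have hfne : f.1 ≠ f.2 := (hA.2 f hf).1
  have hsw : Prod.swap f ∉ A := (hA.2 f hf).2
  have hle : arcGraph (A.erase f) ≤ arcGraph A := by
    intro a b hab
    exact ⟨hab.1, hab.2.imp (fun h' => Finset.mem_of_mem_erase h')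
      (fun h' => Finset.mem_of_mem_erase h')⟩
  have hEdge : s(f.1, f.2) ∉ (arcGraph (A.erase f)).edgeSet := by
    rw [SimpleGraph.mem_edgeSet]
    rintro ⟨_, h' | h'⟩
    · exact Finset.notMem_erase f A h'
    · exact hsw (Finset.erase_subset _ _ h')
  have hdis : ¬ (arcGraph (A.erase f)).Reachable f.2 f.1 := by
    intro hr
    obtain ⟨w⟩ := hr
    obtain ⟨q, hq⟩ : ∃ q : (arcGraph (A.erase f)).Walk f.2 f.1, q.IsPath :=
      ⟨w.toPath.1, w.toPath.2⟩
    have hsub : ∀ e ∈ q.edges, e ∈ (arcGraph A).edgeSet := fun e he =>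
      SimpleGraph.edgeSet_mono hle (q.edges_subset_edgeSet he)
    have hadj : (arcGraph A).Adj f.1 f.2 := ⟨hfne, Or.inl (by simpa using hf)⟩
    have hc : (SimpleGraph.Walk.cons hadj (q.transfer (arcGraph A) hsub)).IsCycle := by
      rw [SimpleGraph.Walk.cons_isCycle_iff]
      constructor
      · exact hq.transfer hsub
      · rw [SimpleGraph.Walk.edges_transfer]
        intro hmem
        exact hEdge (q.edges_subset_edgeSet hmem)
    exact hA.1.IsAcyclic _ hc
  have hphi2 : phi A f f.2 = 1 := if_pos (SimpleGraph.Reachable.refl _)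
  have hphi1 : phi A f f.1 = 0 := if_neg hdis
  by_cases h1 : (u, v) = f
  · have hu : u = f.1 := by rw [← h1]
    have hv : v = f.2 := by rw [← h1]
    rw [if_pos h1, hu, hv, hphi1, hphi2]; ring
  · rw [if_neg h1]
    by_cases h2 : (v, u) = f
    · have hu : u = f.2 := by rw [← h2]
      have hv : v = f.1 := by rw [← h2]
      rw [if_pos h2, hu, hv, hphi1, hphi2]; ring
    · rw [if_neg h2]
      have hadj' : (arcGraph (A.erase f)).Adj u v := by
        refine ⟨h.1, h.2.imp (fun h' => Finset.mem_erase.2 ⟨h1, h'⟩)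
          (fun h' => Finset.mem_erase.2 ⟨h2, h'⟩)⟩
      have : (arcGraph (A.erase f)).Reachable f.2 u ↔
          (arcGraph (A.erase f)).Reachable f.2 v :=
        ⟨fun r => r.trans hadj'.reachable, fun r => r.trans hadj'.symm.reachable⟩
      unfold phi
      by_cases hr : (arcGraph (A.erase f)).Reachable f.2 u
      · rw [if_pos hr, if_pos (this.1 hr)]; ring
      · rw [if_neg hr, if_neg (fun r => hr (this.2 r))]; ring

lemma telescope_darts {V : Type*} {G : SimpleGraph V} (ψ : V → ℝ) {x y : V} (p : G.Walk x y) :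
    (p.darts.map (fun d => ψ d.toProd.2 - ψ d.toProd.1)).sum = ψ y - ψ x := by
  induction p with
  | nil => simp
  | cons h p ih =>
    simp only [SimpleGraph.Walk.darts_cons, List.map_cons, List.sum_cons, ih]
    ring


noncomputable def cnt [DecidableEq U] (L : List (U × U)) (f : U × U) : ℝ :=
  (L.map (fun x => if x = f then (1:ℝ) else 0)).sum

lemma cnt_nil [DecidableEq U] (f : U × U) : cnt ([] : List (U × U)) f = 0 := rfl

lemma cnt_cons [DecidableEq U] (x : U × U) (L : List (U × U)) (f : U × U) :
    cnt (x :: L) f = cnt L f + (if x = f then (1:ℝ) else 0) := by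
  simp [cnt]; ring

lemma cnt_of_not_mem [DecidableEq U] {L : List (U × U)} {f : U × U} (h : f ∉ L) :
    cnt L f = 0 := by
  induction L with
  | nil => rfl
  | cons x L ih =>
    rw [cnt_cons, ih (fun hm => h (List.mem_cons_of_mem _ hm)),
      if_neg (fun he : x = f => h (List.mem_cons.2 (Or.inl he.symm)))]
    ring

lemma cnt_of_mem [DecidableEq U] {L : List (U × U)} (hnd : L.Nodup) {f : U × U}
    (h : f ∈ L) : cnt L f = 1 := by
  induction L with
  | nil => simp at h
  | cons x L ih =>
    rw [cnt_cons]
    rcases List.mem_cons.1 h with he | hm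
    · rw [if_pos he.symm, cnt_of_not_mem (show f ∉ L by rw [he]; exact (List.nodup_cons.1 hnd).1)]; ring
    · rw [ih (List.nodup_cons.1 hnd).2 hm,
        if_neg (fun he : x = f => (List.nodup_cons.1 hnd).1 (show x ∈ L by rw [he]; exact hm))]
      ring

lemma sum_sign_eq_count [DecidableEq U] {f : U × U} (hf : f.1 ≠ f.2) (L : List (U × U)) :
    (L.map (fun x => if x = f then (1:ℝ) else if x = Prod.swap f then -1 else 0)).sum
      = cnt L f - cnt L (Prod.swap f) := by
  have hfs : f ≠ Prod.swap f := fun h => hf (congrArg Prod.fst h)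
  induction L with
  | nil => simp [cnt_nil]
  | cons x L ih =>
    rw [List.map_cons, List.sum_cons, ih, cnt_cons, cnt_cons]
    by_cases h1 : x = f
    · rw [if_pos h1, if_pos h1, if_neg (by rw [h1]; exact hfs)]; ring
    · rw [if_neg h1, if_neg h1]
      by_cases h2 : x = Prod.swap f
      · rw [if_pos h2, if_pos h2]; ring
      · rw [if_neg h2, if_neg h2]; ring

lemma ite_mem_eq_count [DecidableEq U] {L : List (U × U)} (hnd : L.Nodup)
    {f : U × U} (hnb : ¬ (f ∈ L ∧ Prod.swap f ∈ L)) :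
    (if f ∈ L then (1:ℝ) else if Prod.swap f ∈ L then -1 else 0)
      = cnt L f - cnt L (Prod.swap f) := by
  by_cases h1 : f ∈ L
  · have h2 : Prod.swap f ∉ L := fun h => hnb ⟨h1, h⟩
    rw [if_pos h1, cnt_of_mem hnd h1, cnt_of_not_mem h2]; ring
  · rw [if_neg h1, cnt_of_not_mem h1]
    by_cases h2 : Prod.swap f ∈ L
    · rw [if_pos h2, cnt_of_mem hnd h2]; ring
    · rw [if_neg h2, cnt_of_not_mem h2]; ring

lemma dartProds_nodup [DecidableEq U] {A : Finset (U × U)} {x y : U}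
    {p : (arcGraph A).Walk x y} (hp : p.IsPath) : (dartProds p).Nodup := by
  have hedges : p.edges.Nodup := hp.isTrail.edges_nodup
  have hdarts : p.darts.Nodup := hedges.of_map _
  exact hdarts.map SimpleGraph.Dart.toProd_injective

lemma dartProds_not_both [DecidableEq U] {A : Finset (U × U)} {x y : U}
    {p : (arcGraph A).Walk x y} (hp : p.IsPath) {f : U × U} (hf : f.1 ≠ f.2) :
    ¬ (f ∈ dartProds p ∧ Prod.swap f ∈ dartProds p) := by
  rintro ⟨h1, h2⟩
  obtain ⟨d1, hd1, hd1e⟩ := List.mem_map.1 h1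
  obtain ⟨d2, hd2, hd2e⟩ := List.mem_map.1 h2
  have hedges : p.edges.Nodup := hp.isTrail.edges_nodup
  have heq : d1.edge = d2.edge := by
    rw [SimpleGraph.Dart.edge, SimpleGraph.Dart.edge]
    change s(d1.toProd.1, d1.toProd.2) = s(d2.toProd.1, d2.toProd.2)
    rw [hd1e, hd2e]
    exact Sym2.eq_swap
  have : d1 = d2 := List.inj_on_of_nodup_map hedges hd1 hd2 heq
  rw [this, hd2e] at hd1e
  exact hf (congrArg Prod.fst hd1e.symm)

lemma prodSwap_eq_iff {x f : U × U} : Prod.swap x = f ↔ x = Prod.swap f :=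
  ⟨fun h => by rw [← h, Prod.swap_swap], fun h => by rw [h, Prod.swap_swap]⟩

lemma path_value [DecidableEq U] {A : Finset (U × U)} (hA : IsDirTree A)
    {f : U × U} (hf : f ∈ A) {x y : U} {p : (arcGraph A).Walk x y} (hp : p.IsPath) :
    (if f ∈ dartProds p then (1:ℝ) else if Prod.swap f ∈ dartProds p then -1 else 0)
      = phi A f y - phi A f x := by
  have hfne := (hA.2 f hf).1
  rw [ite_mem_eq_count (dartProds_nodup hp) (dartProds_not_both hp hfne)]
  have hcnt : cnt (dartProds p) f - cnt (dartProds p) (Prod.swap f)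
      = ((dartProds p).map
          (fun x => if x = f then (1:ℝ) else if x = Prod.swap f then -1 else 0)).sum :=
    (sum_sign_eq_count hfne _).symm
  rw [hcnt, ← telescope_darts (phi A f) p]
  unfold dartProds
  rw [List.map_map]
  congr 1
  apply List.map_congr_left
  intro d _
  have := phi_sub hA hf d.adj
  simp only [Function.comp_apply]
  rw [this]
  have h1 : (d.toProd.1, d.toProd.2) = d.toProd := rfl
  have h2 : (d.toProd.2, d.toProd.1) = Prod.swap d.toProd := rfl
  rw [h1, h2]
  by_cases ha : d.toProd = f
  · rw [if_pos ha, if_pos ha]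
  · rw [if_neg ha, if_neg ha]
    by_cases hb : d.toProd = Prod.swap f
    · rw [if_pos (prodSwap_eq_iff.2 hb), if_pos hb]
    · rw [if_neg (fun h => hb (prodSwap_eq_iff.1 h)), if_neg hb]

lemma sum_over_arcs [DecidableEq U] {A : Finset (U × U)}
    (hA : ∀ p ∈ A, p.1 ≠ p.2 ∧ Prod.swap p ∉ A)
    (ψ : U × U → ℝ) (hψ : ∀ x, ψ (Prod.swap x) = - ψ x)
    (L : List (U × U)) (hL : ∀ x ∈ L, x ∈ A ∨ Prod.swap x ∈ A) :
    ∑ a ∈ A, ψ a * (cnt L a - cnt L (Prod.swap a)) = (L.map ψ).sum := by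
  induction L with
  | nil => simp [cnt_nil]
  | cons x L ih =>
    have hx := hL x (List.mem_cons_self (a := x) (l := L))
    have hL' := fun y hy => hL y (List.mem_cons_of_mem _ hy)
    rw [List.map_cons, List.sum_cons, ← ih hL']
    have hterm : ∀ a ∈ A,
        ψ a * (cnt (x :: L) a - cnt (x :: L) (Prod.swap a))
        = ψ a * (cnt L a - cnt L (Prod.swap a))
          + ((if a = x then ψ a else 0) - (if a = Prod.swap x then ψ a else 0)) := by
      intro a _
      have e2 : (x = Prod.swap a) ↔ (a = Prod.swap x) :=
        ⟨fun h => by rw [h, Prod.swap_swap], fun h => by rw [h, Prod.swap_swap]⟩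
      rw [cnt_cons, cnt_cons]
      by_cases h1 : a = x
      · rw [if_pos h1.symm, if_pos h1]
        by_cases h2 : a = Prod.swap x
        · rw [if_pos (e2.mpr h2), if_pos h2]; ring
        · rw [if_neg (fun h => h2 (e2.mp h)), if_neg h2]; ring
      · rw [if_neg (fun h => h1 h.symm), if_neg h1]
        by_cases h2 : a = Prod.swap x
        · rw [if_pos (e2.mpr h2), if_pos h2]; ring
        · rw [if_neg (fun h => h2 (e2.mp h)), if_neg h2]; ring
    rw [Finset.sum_congr rfl hterm, Finset.sum_add_distrib, Finset.sum_sub_distrib,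
      Finset.sum_ite_eq' A x ψ, Finset.sum_ite_eq' A (Prod.swap x) ψ]
    rcases hx with hxa | hxa
    · rw [if_pos hxa, if_neg (hA x hxa).2]; ring
    · have hxna : x ∉ A := by
        have := (hA _ hxa).2
        rwa [Prod.swap_swap] at this
      rw [if_neg hxna, if_pos hxa, hψ]; ring

/-- If `T₁ = (U, A₁)` and `T₂ = (U, A₂)` are directed trees on the same vertex set `U`
with `|U| = n+1`, `M₁` the `A₁×A₂` network matrix of `(D₁=(U,A₂), T₁)` and `M₂` the
`A₂×A₁` network matrix of `(D₂=(U,A₁), T₂)`, then `M₁ · M₂` is the identity matrix. -/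
theorem network_matrix_mul_inverse [Fintype U] [DecidableEq U] (n : ℕ)
    (hU : Fintype.card U = n + 1)
    (A₁ A₂ : Finset (U × U)) (h₁ : IsDirTree A₁) (h₂ : IsDirTree A₂)
    (M₁ : Matrix A₁ A₂ ℝ) (M₂ : Matrix A₂ A₁ ℝ)
    (hM₁ : ∀ (f : A₁) (a : A₂),
      ∀ p : (arcGraph A₁).Walk (a : U × U).1 (a : U × U).2, p.IsPath →
        M₁ f a = if (f : U × U) ∈ dartProds p then 1
          else if Prod.swap (f : U × U) ∈ dartProds p then -1 else 0)
    (hM₂ : ∀ (f : A₂) (a : A₁),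
      ∀ p : (arcGraph A₂).Walk (a : U × U).1 (a : U × U).2, p.IsPath →
        M₂ f a = if (f : U × U) ∈ dartProds p then 1
          else if Prod.swap (f : U × U) ∈ dartProds p then -1 else 0) :
    M₁ * M₂ = 1 := by
  ext f g
  rw [Matrix.mul_apply, Matrix.one_apply]
  obtain ⟨w⟩ := h₂.1.isConnected.preconnected (g : U × U).1 (g : U × U).2
  obtain ⟨p, hp⟩ : ∃ p : (arcGraph A₂).Walk (g : U × U).1 (g : U × U).2, p.IsPath :=
    ⟨w.toPath.1, w.toPath.2⟩
  have hM1' : ∀ a : A₂, M₁ f a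
      = phi A₁ (f : U × U) (a : U × U).2 - phi A₁ (f : U × U) (a : U × U).1 := by
    intro a
    obtain ⟨w1⟩ := h₁.1.isConnected.preconnected (a : U × U).1 (a : U × U).2
    obtain ⟨q, hq⟩ : ∃ q : (arcGraph A₁).Walk (a : U × U).1 (a : U × U).2, q.IsPath :=
      ⟨w1.toPath.1, w1.toPath.2⟩
    rw [hM₁ f a q hq, path_value h₁ f.2 hq]
  have hM2' : ∀ a : A₂, M₂ a g
      = cnt (dartProds p) (a : U × U) - cnt (dartProds p) (Prod.swap (a : U × U)) := by
    intro a
    rw [hM₂ a g p hp,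
      ite_mem_eq_count (dartProds_nodup hp) (dartProds_not_both hp (h₂.2 _ a.2).1)]
  have step1 : ∑ a : A₂, M₁ f a * M₂ a g
      = ∑ a ∈ A₂, (phi A₁ (f : U × U) a.2 - phi A₁ (f : U × U) a.1)
          * (cnt (dartProds p) a - cnt (dartProds p) (Prod.swap a)) := by
    rw [← Finset.sum_coe_sort A₂ (fun a => (phi A₁ (f : U × U) a.2 - phi A₁ (f : U × U) a.1)
          * (cnt (dartProds p) a - cnt (dartProds p) (Prod.swap a)))]
    exact Finset.sum_congr rfl (fun a _ => by rw [hM1' a, hM2' a])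
  have hsw : ∀ x : U × U, phi A₁ (f : U × U) (Prod.swap x).2 - phi A₁ (f : U × U) (Prod.swap x).1
      = -(phi A₁ (f : U × U) x.2 - phi A₁ (f : U × U) x.1) := by
    intro x; rw [Prod.fst_swap, Prod.snd_swap]; ring
  have hmem : ∀ x ∈ dartProds p, x ∈ A₂ ∨ Prod.swap x ∈ A₂ := by
    intro x hx
    obtain ⟨d, hd, rfl⟩ := List.mem_map.1 hx
    exact d.adj.2
  rw [step1, sum_over_arcs h₂.2 (fun x => phi A₁ (f : U × U) x.2 - phi A₁ (f : U × U) x.1)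
    hsw (dartProds p) hmem]
  have htel : ((dartProds p).map
        (fun x => phi A₁ (f : U × U) x.2 - phi A₁ (f : U × U) x.1)).sum
      = phi A₁ (f : U × U) (g : U × U).2 - phi A₁ (f : U × U) (g : U × U).1 := by
    unfold dartProds
    rw [List.map_map]
    exact telescope_darts (phi A₁ (f : U × U)) p
  rw [htel]
  have hadj : (arcGraph A₁).Adj (g : U × U).1 (g : U × U).2 :=
    ⟨(h₁.2 _ g.2).1, Or.inl g.2⟩
  rw [phi_sub h₁ f.2 hadj]
  have hg : ((g : U × U).1, (g : U × U).2) = (g : U × U) := rfl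
  rw [hg]
  by_cases he : (g : U × U) = (f : U × U)
  · rw [if_pos he, if_pos (Subtype.ext he).symm]
  · rw [if_neg he]
    have hns : ((g : U × U).2, (g : U × U).1) ≠ (f : U × U) := by
      intro h
      have : Prod.swap (f : U × U) = (g : U × U) := by
        rw [← h]; rfl
      exact (h₁.2 _ f.2).2 (this ▸ g.2)
    rw [if_neg hns, if_neg (fun hfg : f = g => he (by rw [hfg]))]
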